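/- Let p1, p0, q1, q0 be polynomials in ℝ[x,y] (formally, MvPolynomial (Fin 2) ℝ) and define S0 = (p0 − q0)² − (p1 − q1)·(p0·q1 − q0·p1). Let v : Fin 2 → ℝ satisfy S0(v) = 0 and p1(v) ≠ q1(v), and set z0 = −(q0(v) − p0(v)) / (q1(v) − p1(v)). Then (∂S0/∂x)(v) = (q1(v) − p1(v)) · (Fx·Gz − Fz·Gx) and (∂S0/∂y)(v) = (q1(v) − p1(v)) · (Fy·Gz − Fz·Gy), where Fx = z0·(∂p1/∂x)(v) + (∂p0/∂x)(v), Fy = z0·(∂p1/∂y)(v) + (∂p0/∂y)(v), Fz = 2·z0 + p1(v), and Gx, Gy, Gz are defined analogously with q1, q0 in place of p1, p0. -/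

import Mathlib

open MvPolynomial

lemma stmt_6_key (a b c d a' b' c' d' z0 : ℝ) (hne : c - a ≠ 0)
    (h1 : z0 * (c - a) = b - d) (h2 : z0 ^ 2 * (c - a) = d * a - b * c) :
    2 * (b - d) * (b' - d') - (a' - c') * (b * c - d * a)
      - (a - c) * (b' * c + b * c' - (d' * a + d * a'))
    = (c - a) * ((z0 * a' + b') * (2 * z0 + c) - (2 * z0 + a) * (z0 * c' + d')) := by
  linear_combination (-2 * a' + 2 * c') * h2 + (-c * a' - 2 * b' + a * c' + 2 * d') * h1

/-- Factorization of the partial derivatives of S0 at a point of the cutcurve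
    outside the line p1 = q1. -/
theorem stmt_6 (p1 p0 q1 q0 : MvPolynomial (Fin 2) ℝ)
    (S0 : MvPolynomial (Fin 2) ℝ)
    (hS0 : S0 = (p0 - q0) ^ 2 - (p1 - q1) * (p0 * q1 - q0 * p1))
    (v : Fin 2 → ℝ)
    (hv : eval v S0 = 0)
    (hne : eval v p1 ≠ eval v q1)
    (z0 : ℝ)
    (hz0 : z0 = -(eval v q0 - eval v p0) / (eval v q1 - eval v p1))
    (Fx Fy Fz Gx Gy Gz : ℝ)
    (hFx : Fx = z0 * eval v (pderiv (0 : Fin 2) p1) + eval v (pderiv (0 : Fin 2) p0))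
    (hFy : Fy = z0 * eval v (pderiv (1 : Fin 2) p1) + eval v (pderiv (1 : Fin 2) p0))
    (hFz : Fz = 2 * z0 + eval v p1)
    (hGx : Gx = z0 * eval v (pderiv (0 : Fin 2) q1) + eval v (pderiv (0 : Fin 2) q0))
    (hGy : Gy = z0 * eval v (pderiv (1 : Fin 2) q1) + eval v (pderiv (1 : Fin 2) q0))
    (hGz : Gz = 2 * z0 + eval v q1) :
    eval v (pderiv (0 : Fin 2) S0) = (eval v q1 - eval v p1) * (Fx * Gz - Fz * Gx) ∧
    eval v (pderiv (1 : Fin 2) S0) = (eval v q1 - eval v p1) * (Fy * Gz - Fz * Gy) := by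
  have hne' : eval v q1 - eval v p1 ≠ 0 := sub_ne_zero.mpr (Ne.symm hne)
  have h1 : z0 * (eval v q1 - eval v p1) = eval v p0 - eval v q0 := by
    rw [hz0]; field_simp; ring
  have hv' : (eval v p0 - eval v q0) ^ 2
      - (eval v p1 - eval v q1) * (eval v p0 * eval v q1 - eval v q0 * eval v p1) = 0 := by
    rw [hS0] at hv
    simpa using hv
  have h2 : z0 ^ 2 * (eval v q1 - eval v p1)
      = eval v q0 * eval v p1 - eval v p0 * eval v q1 := by
    have h3 : (z0 ^ 2 * (eval v q1 - eval v p1)) * (eval v q1 - eval v p1)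
        = (eval v q0 * eval v p1 - eval v p0 * eval v q1) * (eval v q1 - eval v p1) := by
      linear_combination (z0 * (eval v q1 - eval v p1) + (eval v p0 - eval v q0)) * h1 + hv'
    exact mul_right_cancel₀ hne' h3
  have heval : ∀ i : Fin 2,
      eval v (pderiv i S0) =
        2 * (eval v p0 - eval v q0) * (eval v (pderiv i p0) - eval v (pderiv i q0))
        - (eval v (pderiv i p1) - eval v (pderiv i q1)) * (eval v p0 * eval v q1 - eval v q0 * eval v p1)
        - (eval v p1 - eval v q1) * (eval v (pderiv i p0) * eval v q1 + eval v p0 * eval v (pderiv i q1)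
            - (eval v (pderiv i q0) * eval v p1 + eval v q0 * eval v (pderiv i p1))) := by
    intro i
    rw [hS0]
    simp [pderiv_mul, pderiv_pow]
    ring
  refine ⟨?_, ?_⟩
  · rw [heval 0, hFx, hFz, hGx, hGz]
    exact stmt_6_key (eval v p1) (eval v p0) (eval v q1) (eval v q0) _ _ _ _ z0 hne' h1 h2
  · rw [heval 1, hFy, hFz, hGy, hGz]
    exact stmt_6_key (eval v p1) (eval v p0) (eval v q1) (eval v q0) _ _ _ _ z0 hne' h1 h2
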